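/- (Irreflexivity in B∞.) For every k ≥ 1 and all p, q_1, …, q_k ∈ B∞, p ≠ (((p[q_1])[q_2])…)[q_k]. -/

import Mathlib

set_option maxHeartbeats 1000000


/-- Relators of the infinite braid group `B∞`: commutation `σ_i σ_j = σ_j σ_i` for
`|i - j| > 1` and the braid relation `σ_i σ_j σ_i = σ_j σ_i σ_j` for `|i - j| = 1`. -/
def braidRels : Set (FreeGroup ℕ+) :=
  {r | (∃ i j : ℕ+, (i : ℕ) + 1 < (j : ℕ) ∧
        r = FreeGroup.of i * FreeGroup.of j * (FreeGroup.of i)⁻¹ * (FreeGroup.of j)⁻¹) ∨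
       (∃ i : ℕ+,
        r = FreeGroup.of i * FreeGroup.of (i + 1) * FreeGroup.of i *
            (FreeGroup.of (i + 1))⁻¹ * (FreeGroup.of i)⁻¹ * (FreeGroup.of (i + 1))⁻¹)}

/-- The infinite braid group `B∞`. -/
abbrev Binf : Type := PresentedGroup braidRels

/-- The generator `σ_i` (`i ≥ 1`) of the infinite braid group. -/
def braidGen (i : ℕ+) : Binf := PresentedGroup.of i

/-- The Dehornoy bracket `p[q] = p · s(q) · σ_1 · s(p)⁻¹`, relative to the shift
endomorphism `s`. -/
def bracket (s : Binf →* Binf) (p q : Binf) : Binf :=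
  p * s q * braidGen 1 * (s p)⁻¹

namespace DehornoyProof
open FreeGroup List

variable {α : Type*} [DecidableEq α]

/-- A word is reduced: no adjacent cancelling pair. -/
def IsRed (L : List (α × Bool)) : Prop :=
  List.IsChain (fun a b => ¬(b.1 = a.1 ∧ b.2 = !a.2)) L

theorem reduce_eq_self_of {L : List (α × Bool)} (h : IsRed L) : FreeGroup.reduce L = L := by
  induction L with
  | nil => rfl
  | cons x L ih =>
    have hL : IsRed L := h.tail
    rw [FreeGroup.reduce.cons, ih hL]
    cases L with
    | nil => rfl
    | cons y M =>
      have hxy : ¬(y.1 = x.1 ∧ y.2 = !x.2) := (List.isChain_cons_cons.mp h).1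
      have : ¬(x.1 = y.1 ∧ x.2 = !y.2) := by
        rintro ⟨h1, h2⟩
        exact hxy ⟨h1.symm, by cases x.2 <;> cases y.2 <;> simp_all⟩
      simp [this]

theorem isRed_reduce (L : List (α × Bool)) : IsRed (FreeGroup.reduce L) := by
  induction L with
  | nil => exact List.isChain_nil
  | cons x L ih =>
    rw [FreeGroup.reduce.cons]
    rcases hL : FreeGroup.reduce L with _ | ⟨y, M⟩
    · exact List.isChain_singleton x
    · rw [hL] at ih
      by_cases hc : x.1 = y.1 ∧ x.2 = !y.2
      · simp only [hc, if_true]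
        exact ih.tail
      · simp only [hc, if_false]
        refine List.isChain_cons_cons.mpr ⟨?_, ih⟩
        rintro ⟨h1, h2⟩
        exact hc ⟨h1.symm, by cases x.2 <;> cases y.2 <;> simp_all⟩

theorem isRed_toWord (x : FreeGroup α) : IsRed x.toWord := by
  rcases x with ⟨L⟩
  rw [FreeGroup.quot_mk_eq_mk, FreeGroup.toWord_mk]
  exact isRed_reduce L

theorem toWord_mk_isRed {L : List (α × Bool)} (h : IsRed L) : (FreeGroup.mk L).toWord = L := by
  rw [FreeGroup.toWord_mk, reduce_eq_self_of h]

theorem toWord_mul' (x y : FreeGroup α) :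
    (x * y).toWord = FreeGroup.reduce (x.toWord ++ y.toWord) := by
  conv_lhs => rw [← FreeGroup.mk_toWord (x := x), ← FreeGroup.mk_toWord (x := y)]
  rw [FreeGroup.mul_mk, FreeGroup.toWord_mk]

/-- iff there is no cancellation at the junction, the product word is the concatenation. -/
theorem toWord_mul_of_isRed {x y : FreeGroup α} (h : IsRed (x.toWord ++ y.toWord)) :
    (x * y).toWord = x.toWord ++ y.toWord := by
  rw [toWord_mul', reduce_eq_self_of h]

theorem isRed_append_iff {L1 L2 : List (α × Bool)} :
    IsRed (L1 ++ L2) ↔ IsRed L1 ∧ IsRed L2 ∧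
      ∀ a ∈ L1.getLast?, ∀ b ∈ L2.head?, ¬(b.1 = a.1 ∧ b.2 = !a.2) :=
  List.isChain_append

/-- `mk L` as a product of letters. -/
theorem mk_eq_prod (L : List (α × Bool)) :
    FreeGroup.mk L = (L.map fun l => cond l.2 (FreeGroup.of l.1) (FreeGroup.of l.1)⁻¹).prod := by
  have := FreeGroup.lift_mk (f := FreeGroup.of (α := α)) (L := L)
  rw [FreeGroup.lift_of_eq_id] at this
  simpa using this


open FreeGroup List

abbrev F : Type := FreeGroup ℕ+

theorem pnat_ne {a b : ℕ+} (h : (a : ℕ) ≠ (b : ℕ)) : a ≠ b := fun hc => h (by rw [hc])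

/-- images of generators under the Artin automorphism `φ i`. -/
def fa (i n : ℕ+) : F :=
  if n = i then of i * of (i + 1) * (of i)⁻¹
  else if n = i + 1 then of i
  else of n

/-- images of generators under the inverse Artin automorphism. -/
def fb (i n : ℕ+) : F :=
  if n = i then of (i + 1)
  else if n = i + 1 then (of (i + 1))⁻¹ * of i * of (i + 1)
  else of n

def AA (i : ℕ+) : F →* F := FreeGroup.lift (fa i)
def BB (i : ℕ+) : F →* F := FreeGroup.lift (fb i)

@[simp] theorem fa_same (i : ℕ+) : fa i i = of i * of (i + 1) * (of i)⁻¹ := by simp [fa]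
theorem fa_succ (i : ℕ+) : fa i (i + 1) = of i := by
  have : i + 1 ≠ i := pnat_ne (by simp)
  simp [fa, this]
theorem fa_other {i n : ℕ+} (h1 : n ≠ i) (h2 : n ≠ i + 1) : fa i n = of n := by simp [fa, h1, h2]

@[simp] theorem fb_same (i : ℕ+) : fb i i = of (i + 1) := by simp [fb]
theorem fb_succ (i : ℕ+) : fb i (i + 1) = (of (i + 1))⁻¹ * of i * of (i + 1) := by
  have : i + 1 ≠ i := pnat_ne (by simp)
  simp [fb, this]
theorem fb_other {i n : ℕ+} (h1 : n ≠ i) (h2 : n ≠ i + 1) : fb i n = of n := by simp [fb, h1, h2]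

@[simp] theorem AA_of (i n : ℕ+) : AA i (of n) = fa i n := FreeGroup.lift_apply_of
@[simp] theorem BB_of (i n : ℕ+) : BB i (of n) = fb i n := FreeGroup.lift_apply_of

theorem BA_comp (i : ℕ+) : (BB i).comp (AA i) = MonoidHom.id F := by
  apply FreeGroup.ext_hom
  intro n
  have h1 : i + 1 ≠ i := pnat_ne (by simp)
  by_cases hn : n = i
  · subst hn
    simp [fa_succ, fb_succ]
    group
  · by_cases hn2 : n = i + 1
    · subst hn2
      simp [fa_succ]
    · simp [fa_other hn hn2, fb_other hn hn2]

theorem AB_comp (i : ℕ+) : (AA i).comp (BB i) = MonoidHom.id F := by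
  apply FreeGroup.ext_hom
  intro n
  have h1 : i + 1 ≠ i := pnat_ne (by simp)
  by_cases hn : n = i
  · subst hn
    simp [fa_succ]
  · by_cases hn2 : n = i + 1
    · subst hn2
      simp [fa_succ, fb_succ]
      group
    · simp [fa_other hn hn2, fb_other hn hn2]

/-- The Artin automorphism of the free group. -/
def phi (i : ℕ+) : MulAut F := MonoidHom.toMulEquiv (AA i) (BB i) (BA_comp i) (AB_comp i)

@[simp] theorem phi_apply (i : ℕ+) (w : F) : phi i w = AA i w := rfl
@[simp] theorem phi_symm_apply (i : ℕ+) (w : F) : (phi i).symm w = BB i w := rfl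

theorem mulAut_ext {e f : MulAut F} (h : ∀ a : ℕ+, e (of a) = f (of a)) : e = f := by
  have : (e : F →* F) = (f : F →* F) := FreeGroup.ext_hom _ _ h
  ext w
  exact congrArg (fun (g : F →* F) => g w) this


theorem comm_rel {i j : ℕ+} (hij : (i : ℕ) + 1 < (j : ℕ)) :
    phi i * phi j = phi j * phi i := by
  have hji : i ≠ j := pnat_ne (by omega)
  have h1 : i ≠ j + 1 := pnat_ne (by have := i.pos; push_cast; omega)
  have h2 : (i + 1 : ℕ+) ≠ j := pnat_ne (by have := i.pos; push_cast; omega)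
  have h3 : (i + 1 : ℕ+) ≠ j + 1 := pnat_ne (by have := i.pos; push_cast; omega)
  have h4 : j ≠ i := hji.symm
  have h5 : j ≠ i + 1 := h2.symm
  have h6 : (j + 1 : ℕ+) ≠ i := h1.symm
  have h7 : (j + 1 : ℕ+) ≠ i + 1 := h3.symm
  have h8 : (i + 1 : ℕ+) ≠ i := pnat_ne (by have := i.pos; push_cast; omega)
  have h9 : (j + 1 : ℕ+) ≠ j := pnat_ne (by have := i.pos; push_cast; omega)
  apply mulAut_ext
  intro a
  simp only [MulAut.mul_apply, phi_apply]
  by_cases ha : a = i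
  · subst ha
    simp [fa, _root_.map_mul, _root_.map_inv, hji, h1, h2, h3, h4, h5, h6, h7, h8, h9]
  · by_cases ha2 : a = i + 1
    · subst ha2
      simp [fa, _root_.map_mul, _root_.map_inv, hji, h1, h2, h3, h4, h5, h6, h7, h8, h9]
    · by_cases hb : a = j
      · subst hb
        simp [fa, _root_.map_mul, _root_.map_inv, hji, h1, h2, h3, h4, h5, h6, h7, h8, h9]
      · by_cases hb2 : a = j + 1
        · subst hb2
          simp [fa, _root_.map_mul, _root_.map_inv, hji, h1, h2, h3, h4, h5, h6, h7, h8, h9]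
        · simp [fa, _root_.map_mul, _root_.map_inv, ha, ha2, hb, hb2]

theorem braid_rel (i : ℕ+) :
    phi i * phi (i + 1) * phi i = phi (i + 1) * phi i * phi (i + 1) := by
  have e1 : i ≠ i + 1 := pnat_ne (by have := i.pos; push_cast; omega)
  have e2 : i ≠ i + 1 + 1 := pnat_ne (by have := i.pos; push_cast; omega)
  have e3 : (i + 1 : ℕ+) ≠ i := e1.symm
  have e4 : (i + 1 : ℕ+) ≠ i + 1 + 1 := pnat_ne (by have := i.pos; push_cast; omega)
  have e5 : (i + 1 + 1 : ℕ+) ≠ i := e2.symm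
  have e6 : (i + 1 + 1 : ℕ+) ≠ i + 1 := e4.symm
  apply mulAut_ext
  intro a
  simp only [MulAut.mul_apply, phi_apply]
  by_cases ha : a = i
  · subst ha
    simp [fa, _root_.map_mul, _root_.map_inv, e1, e2, e3, e4, e5, e6]
    group
  · by_cases ha2 : a = i + 1
    · subst ha2
      simp [fa, _root_.map_mul, _root_.map_inv, e1, e2, e3, e4, e5, e6]
    · by_cases ha3 : a = i + 1 + 1
      · subst ha3
        simp [fa, _root_.map_mul, _root_.map_inv, e1, e2, e3, e4, e5, e6]
      · simp [fa, _root_.map_mul, _root_.map_inv, ha, ha2, ha3]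


theorem rels_hold : ∀ r ∈ braidRels, FreeGroup.lift phi r = 1 := by
  rintro r (⟨i, j, hij, rfl⟩ | ⟨i, rfl⟩)
  · simp only [_root_.map_mul, _root_.map_inv, FreeGroup.lift_apply_of]
    rw [show phi i * phi j * (phi i)⁻¹ * (phi j)⁻¹ = (phi i * phi j) * (phi j * phi i)⁻¹ by group]
    rw [comm_rel hij, mul_inv_cancel]
  · simp only [_root_.map_mul, _root_.map_inv, FreeGroup.lift_apply_of]
    rw [show phi i * phi (i+1) * phi i * (phi (i+1))⁻¹ * (phi i)⁻¹ * (phi (i+1))⁻¹ =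
        (phi i * phi (i+1) * phi i) * (phi (i+1) * phi i * phi (i+1))⁻¹ by group]
    rw [braid_rel i, mul_inv_cancel]

/-- The Artin representation of the braid group. -/
def rho : Binf →* MulAut F := PresentedGroup.toGroup rels_hold

@[simp] theorem rho_gen (i : ℕ+) : rho (braidGen i) = phi i := PresentedGroup.toGroup.of rels_hold



/-- subgroup of words not involving strand 1 -/
def Hsub : Subgroup F := Subgroup.closure {w : F | ∃ k : ℕ+, k ≠ 1 ∧ w = of k}

theorem mem_Hsub_iff {w : F} : w ∈ Hsub ↔ ∀ l ∈ w.toWord, l.1 ≠ (1 : ℕ+) := by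
  constructor
  · intro hw
    induction hw using Subgroup.closure_induction with
    | mem x hx =>
      obtain ⟨k, hk, rfl⟩ := hx
      intro l hl
      rw [FreeGroup.toWord_of] at hl
      simp only [List.mem_singleton] at hl
      subst hl; exact hk
    | one => intro l hl; rw [FreeGroup.toWord_one] at hl; simp at hl
    | mul x y _ _ hx hy =>
      intro l hl
      have := (FreeGroup.toWord_mul_sublist x y).mem hl
      rcases List.mem_append.mp this with h | h
      · exact hx l h
      · exact hy l h
    | inv x _ hx =>
      intro l hl
      rw [FreeGroup.toWord_inv, FreeGroup.invRev] at hl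
      rcases List.mem_map.mp (List.mem_reverse.mp hl) with ⟨a, ha, rfl⟩
      simpa using hx a ha
  · intro hw
    rw [← FreeGroup.mk_toWord (x := w), mk_eq_prod]
    apply Subgroup.list_prod_mem
    intro x hx
    rcases List.mem_map.mp hx with ⟨l, hl, rfl⟩
    have hk := hw l hl
    cases l.2 with
    | true => exact Subgroup.subset_closure ⟨l.1, hk, by simp⟩
    | false =>
      exact Subgroup.inv_mem _ (Subgroup.subset_closure ⟨l.1, hk, by simp⟩)

/-- The stabilizer class: automorphisms fixing `x₁` and preserving `Hsub`. -/
def StabC : Subgroup (MulAut F) where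
  carrier := {e | e (of 1) = of 1 ∧ ∀ w : F, w ∈ Hsub ↔ e w ∈ Hsub}
  one_mem' := ⟨rfl, fun _ => Iff.rfl⟩
  mul_mem' := by
    rintro a b ⟨ha1, ha2⟩ ⟨hb1, hb2⟩
    refine ⟨?_, fun w => (hb2 w).trans (ha2 (b w))⟩
    show a (b (of 1)) = of 1
    rw [hb1, ha1]
  inv_mem' := by
    rintro a ⟨ha1, ha2⟩
    constructor
    · show a⁻¹ (of 1) = of 1
      conv_lhs => rw [← ha1]
      exact a.toEquiv.symm_apply_apply _
    · intro w
      have h := ha2 (a⁻¹ w)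
      have : a (a⁻¹ w) = w := a.toEquiv.apply_symm_apply _
      rw [this] at h
      exact h.symm

theorem AA_mem_Hsub (i : ℕ+) {w : F} (hw : w ∈ Hsub) (hi : i ≠ 1) : AA i w ∈ Hsub := by
  have hi1 : (i + 1 : ℕ+) ≠ 1 := pnat_ne (by have := i.pos; push_cast; omega)
  induction hw using Subgroup.closure_induction with
  | mem x hx =>
    obtain ⟨k, hk, rfl⟩ := hx
    rw [AA_of]
    by_cases h1 : k = i
    · rw [h1, fa_same]
      exact Subgroup.mul_mem _ (Subgroup.mul_mem _ (Subgroup.subset_closure ⟨i, hi, rfl⟩)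
        (Subgroup.subset_closure ⟨i + 1, hi1, rfl⟩))
        (Subgroup.inv_mem _ (Subgroup.subset_closure ⟨i, hi, rfl⟩))
    · by_cases h2 : k = i + 1
      · rw [h2, fa_succ]; exact Subgroup.subset_closure ⟨i, hi, rfl⟩
      · rw [fa_other h1 h2]; exact Subgroup.subset_closure ⟨k, hk, rfl⟩
  | one => simpa using Subgroup.one_mem _
  | mul x y _ _ hx hy => rw [_root_.map_mul]; exact Subgroup.mul_mem _ hx hy
  | inv x _ hx => rw [_root_.map_inv]; exact Subgroup.inv_mem _ hx

theorem BB_mem_Hsub (i : ℕ+) {w : F} (hw : w ∈ Hsub) (hi : i ≠ 1) : BB i w ∈ Hsub := by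
  have hi1 : (i + 1 : ℕ+) ≠ 1 := pnat_ne (by have := i.pos; push_cast; omega)
  induction hw using Subgroup.closure_induction with
  | mem x hx =>
    obtain ⟨k, hk, rfl⟩ := hx
    rw [BB_of]
    by_cases h1 : k = i
    · rw [h1, fb_same]; exact Subgroup.subset_closure ⟨i + 1, hi1, rfl⟩
    · by_cases h2 : k = i + 1
      · rw [h2, fb_succ]
        exact Subgroup.mul_mem _ (Subgroup.mul_mem _
          (Subgroup.inv_mem _ (Subgroup.subset_closure ⟨i + 1, hi1, rfl⟩))
          (Subgroup.subset_closure ⟨i, hi, rfl⟩))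
          (Subgroup.subset_closure ⟨i + 1, hi1, rfl⟩)
      · rw [fb_other h1 h2]; exact Subgroup.subset_closure ⟨k, hk, rfl⟩
  | one => simpa using Subgroup.one_mem _
  | mul x y _ _ hx hy => rw [_root_.map_mul]; exact Subgroup.mul_mem _ hx hy
  | inv x _ hx => rw [_root_.map_inv]; exact Subgroup.inv_mem _ hx

theorem phi_mem_StabC {i : ℕ+} (hi : i ≠ 1) : phi i ∈ StabC := by
  have hi1 : (i + 1 : ℕ+) ≠ 1 := pnat_ne (by have := i.pos; push_cast; omega)
  constructor
  · show AA i (of 1) = of 1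
    rw [AA_of, fa_other (Ne.symm hi) (Ne.symm hi1)]
  · intro w
    constructor
    · intro hw; exact AA_mem_Hsub i hw hi
    · intro hw
      have h2 := BB_mem_Hsub i hw hi
      rw [phi_apply] at h2
      have : BB i (AA i w) = w := by
        have := congrArg (fun (g : F →* F) => g w) (BA_comp i)
        simpa using this
      rwa [this] at h2

/-- letter statistic: `some b` for `x₁^{±b}`, `none` for other strands. -/
def fLet (l : ℕ+ × Bool) : Option Bool := if l.1 = (1 : ℕ+) then some l.2 else none

/-- The "last letter" statistic of a word: `none` if empty, `some (some b)` if the last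
letter is `x₁^{b}`, `some none` otherwise. -/
def tls (w : F) : Option (Option Bool) := w.toWord.getLast?.map fLet

theorem last_one_decomp (L : List (ℕ+ × Bool)) :
    (∀ l ∈ L, l.1 ≠ 1) ∨
      ∃ L1 b L2, L = L1 ++ ((1 : ℕ+), b) :: L2 ∧ ∀ l ∈ L2, l.1 ≠ 1 := by
  induction L using List.reverseRecOn with
  | nil => left; simp
  | append_singleton M a ih =>
    by_cases ha : a.1 = (1 : ℕ+)
    · right
      refine ⟨M, a.2, [], ?_, by simp⟩
      have : a = ((1 : ℕ+), a.2) := by rw [← ha]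
      rw [← this]
    · rcases ih with h | ⟨L1, b, L2, rfl, h2⟩
      · left
        intro l hl
        rcases List.mem_append.mp hl with h' | h'
        · exact h l h'
        · rw [List.mem_singleton.mp h']; exact ha
      · right
        refine ⟨L1, b, L2 ++ [a], by simp, ?_⟩
        intro l hl
        rcases List.mem_append.mp hl with h' | h'
        · exact h2 l h'
        · rw [List.mem_singleton.mp h']; exact ha

theorem tls_of_Hsub {w : F} (hw : w ∈ Hsub) :
    tls w = if w = 1 then none else some none := by
  by_cases h1 : w = 1
  · simp [tls, h1, FreeGroup.toWord_one]
  · have hne : w.toWord ≠ [] := fun hc => h1 (FreeGroup.toWord_eq_nil_iff.mp hc)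
    have hlast := List.getLast_mem hne
    have h2 : (w.toWord.getLast hne).1 ≠ 1 := mem_Hsub_iff.mp hw _ hlast
    simp [tls, h1, List.getLast?_eq_getLast hne, fLet, h2]

/-- The single-letter word `x₁^{±1}`. -/
def tb (b : Bool) : F := FreeGroup.mk [((1 : ℕ+), b)]

theorem tb_toWord (b : Bool) : (tb b).toWord = [((1 : ℕ+), b)] :=
  toWord_mk_isRed (List.isChain_singleton _)

theorem stab_tb {e : MulAut F} (he : e ∈ StabC) (b : Bool) : e (tb b) = tb b := by
  cases b with
  | true => exact he.1
  | false =>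
    have : tb false = (FreeGroup.of (1 : ℕ+))⁻¹ := by
      rw [show FreeGroup.of (1 : ℕ+) = FreeGroup.mk [((1 : ℕ+), true)] from rfl,
        FreeGroup.inv_mk]
      rfl
    rw [this, _root_.map_inv, he.1]

theorem junction_from_tls {T L : List (ℕ+ × Bool)} {b : Bool}
    (htls : T.getLast?.map fLet = L.getLast?.map fLet)
    (hj : ∀ a ∈ L.getLast?, ¬((1 : ℕ+) = a.1 ∧ b = !a.2)) :
    ∀ a ∈ T.getLast?, ¬((1 : ℕ+) = a.1 ∧ b = !a.2) := by
  intro a ha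
  rintro ⟨h1, h2⟩
  rw [Option.mem_def] at ha
  rw [ha] at htls
  rcases hL : L.getLast? with _ | a'
  · rw [hL] at htls; simp at htls
  · rw [hL] at htls
    simp only [Option.map_some, Option.some.injEq] at htls
    have hfa : fLet a = some a.2 := by simp [fLet, ← h1]
    rw [hfa] at htls
    by_cases ha' : a'.1 = (1 : ℕ+)
    · have : a'.2 = a.2 := by
        have := htls.symm
        rw [fLet, if_pos ha'] at this
        simpa using this
      exact hj a' (by rw [hL]; rfl) ⟨ha'.symm, by rw [this, ← h2]⟩
    · rw [fLet, if_neg ha'] at htls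
      simp at htls

theorem tls_stab {e : MulAut F} (he : e ∈ StabC) (w : F) : tls (e w) = tls w := by
  suffices H : ∀ n (w : F), w.toWord.length ≤ n → tls (e w) = tls w from H _ w le_rfl
  intro n
  induction n with
  | zero =>
    intro w hw
    have : w.toWord = [] := List.length_eq_zero_iff.mp (Nat.le_zero.mp hw)
    rw [FreeGroup.toWord_eq_nil_iff.mp this, _root_.map_one]
  | succ n ih =>
    intro w hlen
    rcases last_one_decomp w.toWord with hfree | ⟨L1, b, L2, hdec, hL2⟩
    · have hw : w ∈ Hsub := mem_Hsub_iff.mpr hfree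
      have hew : e w ∈ Hsub := (he.2 w).mp hw
      rw [tls_of_Hsub hew, tls_of_Hsub hw]
      have hiff : e w = 1 ↔ w = 1 := by
        constructor
        · intro h'; exact e.injective (a₁ := w) (a₂ := 1) (by rw [h', _root_.map_one])
        · intro h'; rw [h', _root_.map_one]
      by_cases h1 : w = 1
      · rw [if_pos h1, if_pos (hiff.mpr h1)]
      · rw [if_neg h1, if_neg (fun hc => h1 (hiff.mp hc))]
    · have hdec' : w.toWord = L1 ++ [((1 : ℕ+), b)] ++ L2 := by simpa using hdec
      have hred : IsRed w.toWord := isRed_toWord w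
      have hredL1 : IsRed L1 := hred.prefix ⟨((1 : ℕ+), b) :: L2, by rw [hdec]⟩
      have hredbL2 : IsRed (((1 : ℕ+), b) :: L2) := hred.suffix ⟨L1, by rw [hdec]⟩
      have hredL2 : IsRed L2 := hredbL2.tail
      set u := FreeGroup.mk L1 with hu_def
      set h := FreeGroup.mk L2 with hh_def
      have hu : u.toWord = L1 := toWord_mk_isRed hredL1
      have hh : h.toWord = L2 := toWord_mk_isRed hredL2
      have hjunc : ∀ a ∈ L1.getLast?, ¬((1 : ℕ+) = a.1 ∧ b = !a.2) := by
        have h' : IsRed (L1 ++ ((1 : ℕ+), b) :: L2) := by rw [← hdec]; exact hred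
        have h'' := (isRed_append_iff.mp h').2.2
        intro a ha
        exact h'' a ha ((1 : ℕ+), b) rfl
      have hw_eq : w = u * tb b * h := by
        rw [hu_def, hh_def, tb, FreeGroup.mul_mk, FreeGroup.mul_mk, ← hdec',
          FreeGroup.mk_toWord]
      have hhH : h ∈ Hsub := mem_Hsub_iff.mpr (by rw [hh]; exact hL2)
      have hehH : e h ∈ Hsub := (he.2 h).mp hhH
      have hT2free : ∀ l ∈ (e h).toWord, l.1 ≠ (1 : ℕ+) := mem_Hsub_iff.mp hehH
      have hlenL1 : L1.length ≤ n := by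
        rw [hdec'] at hlen
        simp only [List.length_append, List.length_singleton] at hlen
        omega
      have IH : (e u).toWord.getLast?.map fLet = L1.getLast?.map fLet := by
        have := ih u (by rw [hu]; exact hlenL1)
        rw [tls, tls, hu] at this
        exact this
      have stepA : (e u * tb b).toWord = (e u).toWord ++ [((1 : ℕ+), b)] := by
        have hcond : IsRed ((e u).toWord ++ (tb b).toWord) := by
          rw [tb_toWord, isRed_append_iff]
          refine ⟨isRed_toWord _, List.isChain_singleton _, ?_⟩
          intro a ha y hy
          simp only [List.head?_cons, Option.mem_def, Option.some.injEq] at hy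
          subst hy
          exact junction_from_tls IH hjunc a ha
        rw [toWord_mul_of_isRed hcond, tb_toWord]
      have stepB : (e w).toWord = ((e u).toWord ++ [((1 : ℕ+), b)]) ++ (e h).toWord := by
        rw [hw_eq, _root_.map_mul, _root_.map_mul, stab_tb he b]
        have hcond : IsRed ((e u * tb b).toWord ++ (e h).toWord) := by
          rw [isRed_append_iff]
          refine ⟨isRed_toWord _, isRed_toWord _, ?_⟩
          intro a ha y hy
          rw [stepA, List.getLast?_concat, Option.mem_def, Option.some.injEq] at ha
          subst ha
          rintro ⟨h1, h2⟩
          exact hT2free y (List.mem_of_mem_head? hy) h1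
        rw [toWord_mul_of_isRed hcond, stepA]
      -- now compute both statistics
      have hemp : L2 = [] ↔ (e h).toWord = [] := by
        rw [FreeGroup.toWord_eq_nil_iff, ← hh, FreeGroup.toWord_eq_nil_iff]
        constructor
        · intro h'; rw [h', _root_.map_one]
        · intro h'; exact e.injective (a₁ := h) (a₂ := 1) (by rw [h', _root_.map_one])
      rw [tls, tls, stepB, hdec']
      by_cases hL2e : L2 = []
      · rw [hL2e]
        have hT2 : (e h).toWord = [] := hemp.mp hL2e
        rw [hT2]
        simp [List.getLast?_concat]
      · have hT2e : (e h).toWord ≠ [] := fun hc => hL2e (hemp.mpr hc)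
        have assoc1 : L1 ++ [((1 : ℕ+), b)] ++ L2 = (L1 ++ [((1 : ℕ+), b)]) ++ L2 := by
          simp [List.append_assoc]
        have triple : ∀ (A B : List (ℕ+ × Bool)) (x : ℕ+ × Bool), B ≠ [] →
            ((A ++ [x]) ++ B).getLast? = B.getLast? := by
          intro A B x hB
          rw [List.getLast?_append, List.getLast?_eq_getLast hB]
          rfl
        rw [assoc1, triple _ _ _ hT2e, triple _ _ _ hL2e,
          List.getLast?_eq_getLast hT2e, List.getLast?_eq_getLast hL2e]
        have k1 : ((e h).toWord.getLast hT2e).1 ≠ 1 := hT2free _ (List.getLast_mem _)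
        have k2 : (L2.getLast hL2e).1 ≠ 1 := hL2 _ (List.getLast_mem _)
        simp [fLet, k1, k2]

/-! ### The effect of the first Artin generator -/

theorem two_ne_one : (2 : ℕ+) ≠ 1 := by decide
theorem one_ne_two : (1 : ℕ+) ≠ 2 := by decide
theorem one_add_one : (1 : ℕ+) + 1 = 2 := rfl

/-- strand swap 1 ↔ 2 -/
def sw (n : ℕ+) : ℕ+ := if n = 1 then 2 else if n = 2 then 1 else n

theorem sw_inj : Function.Injective sw := by
  intro a b h
  unfold sw at h
  split_ifs at h <;> simp_all

theorem sw_eq_two {n : ℕ+} (h : n ≠ 1) : sw n ≠ 2 := by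
  unfold sw
  split_ifs with h1 h2
  · exact absurd h1 h
  · exact one_ne_two
  · exact h2

def tau : F →* F := FreeGroup.map sw

def DD (L : List (ℕ+ × Bool)) : List (ℕ+ × Bool) := L.map (fun l => (sw l.1, l.2))

theorem isRed_DD {L : List (ℕ+ × Bool)} (h : IsRed L) : IsRed (DD L) := by
  rw [IsRed, DD, List.isChain_map]
  refine h.imp ?_
  rintro a b hab ⟨h1, h2⟩
  exact hab ⟨sw_inj h1, h2⟩

theorem DD_free {L : List (ℕ+ × Bool)} (h : ∀ l ∈ L, l.1 ≠ 1) :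
    ∀ l ∈ DD L, l.1 ≠ 2 := by
  intro l hl
  rcases List.mem_map.mp hl with ⟨a, ha, rfl⟩
  exact sw_eq_two (h a ha)

theorem tau_mk (L : List (ℕ+ × Bool)) : tau (FreeGroup.mk L) = FreeGroup.mk (DD L) :=
  FreeGroup.map.mk

theorem AA1_eq_tau {w : F} (hw : w ∈ Hsub) : AA 1 w = tau w := by
  induction hw using Subgroup.closure_induction with
  | mem x hx =>
    obtain ⟨k, hk, rfl⟩ := hx
    rw [AA_of, show tau (of k) = of (sw k) from FreeGroup.map.of]
    by_cases h2 : k = 2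
    · rw [h2, show fa 1 2 = of 1 by rw [← one_add_one, fa_succ], show sw 2 = 1 by decide]
    · rw [fa_other hk (by rw [one_add_one]; exact h2), show sw k = k by unfold sw; simp [hk, h2]]
  | one => rw [_root_.map_one, _root_.map_one]
  | mul x y _ _ hx hy => rw [_root_.map_mul, _root_.map_mul, hx, hy]
  | inv x _ hx => rw [_root_.map_inv, _root_.map_inv, hx]

/-- reduced form of `x₁⁻¹ · (word)` where the word is the swap of a 1-free word. -/
def CC (L : List (ℕ+ × Bool)) : List (ℕ+ × Bool) :=
  if (DD L).head? = some ((1 : ℕ+), true) then (DD L).tail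
  else ((1 : ℕ+), false) :: DD L

theorem CC_isRed {L : List (ℕ+ × Bool)} (h : IsRed L) : IsRed (CC L) := by
  unfold CC
  split_ifs with hc
  · exact (isRed_DD h).tail
  · refine List.isChain_cons.mpr ⟨?_, isRed_DD h⟩
    intro y hy
    rintro ⟨h1, h2⟩
    apply hc
    rw [Option.mem_def] at hy
    rw [hy]
    exact congrArg some (Prod.ext (by simpa using h1) (by simpa using h2))

theorem CC_free {L : List (ℕ+ × Bool)} (h : ∀ l ∈ L, l.1 ≠ 1) :
    ∀ l ∈ CC L, l.1 ≠ 2 := by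
  unfold CC
  split_ifs with hc
  · intro l hl; exact DD_free h l (List.mem_of_mem_tail hl)
  · intro l hl
    rcases List.mem_cons.mp hl with rfl | hl'
    · exact one_ne_two
    · exact DD_free h l hl'

theorem mk_step (A B : List (ℕ+ × Bool)) (x : ℕ+) (d : Bool) :
    FreeGroup.mk (A ++ (x, !d) :: (x, d) :: B) = FreeGroup.mk (A ++ B) :=
  FreeGroup.reduce.exact (FreeGroup.reduce.Step.eq FreeGroup.Red.Step.not_rev)

theorem CC_group (L : List (ℕ+ × Bool)) :
    FreeGroup.mk (((1 : ℕ+), false) :: DD L) = FreeGroup.mk (CC L) := by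
  unfold CC
  split_ifs with hc
  · rcases hD : DD L with _ | ⟨y, T⟩
    · rw [hD] at hc; simp at hc
    · rw [hD] at hc
      simp only [List.head?_cons, Option.some.injEq] at hc
      subst hc
      have := mk_step ([] : List (ℕ+ × Bool)) T 1 true
      simpa using this
  · rfl

theorem CC_eq_single {L : List (ℕ+ × Bool)} (h : IsRed L)
    (hc : CC L = [((1 : ℕ+), false)]) : L = [] := by
  unfold CC at hc
  split_ifs at hc with h1
  · exfalso
    rcases hD : DD L with _ | ⟨y, T⟩
    · rw [hD] at h1; simp at h1
    · rw [hD] at h1 hc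
      simp only [List.head?_cons, Option.some.injEq] at h1
      subst h1
      simp only [List.tail_cons] at hc
      subst hc
      have := isRed_DD h
      rw [hD] at this
      exact (List.isChain_cons_cons.mp this).1 ⟨rfl, rfl⟩
  · simp only [List.cons.injEq] at hc
    have : DD L = [] := hc.2
    rcases L with _ | ⟨a, L'⟩
    · rfl
    · exact absurd this (by simp [DD])

theorem tb_true : tb true = FreeGroup.of (1 : ℕ+) := rfl

theorem tb_false : tb false = (FreeGroup.of (1 : ℕ+))⁻¹ := by
  rw [show FreeGroup.of (1 : ℕ+) = FreeGroup.mk [((1 : ℕ+), true)] from rfl, FreeGroup.inv_mk]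
  rfl

theorem AA1_tb (b : Bool) :
    AA 1 (tb b) = FreeGroup.mk [((1 : ℕ+), true), ((2 : ℕ+), b), ((1 : ℕ+), false)] := by
  have h1 : AA 1 (FreeGroup.of (1 : ℕ+)) = of 1 * of 2 * (of 1)⁻¹ := by
    rw [AA_of, fa_same, one_add_one]
  have hof1 : FreeGroup.of (1 : ℕ+) = FreeGroup.mk [((1 : ℕ+), true)] := rfl
  have hof2 : FreeGroup.of (2 : ℕ+) = FreeGroup.mk [((2 : ℕ+), true)] := rfl
  have hinv1 : (FreeGroup.of (1 : ℕ+))⁻¹ = FreeGroup.mk [((1 : ℕ+), false)] := by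
    rw [hof1, FreeGroup.inv_mk]; rfl
  have hinv2 : (FreeGroup.of (2 : ℕ+))⁻¹ = FreeGroup.mk [((2 : ℕ+), false)] := by
    rw [hof2, FreeGroup.inv_mk]; rfl
  have key : ∀ c : Bool, FreeGroup.mk [((1 : ℕ+), true), ((2 : ℕ+), c), ((1 : ℕ+), false)] =
      of 1 * FreeGroup.mk [((2 : ℕ+), c)] * (of 1)⁻¹ := by
    intro c
    rw [hinv1, hof1, FreeGroup.mul_mk, FreeGroup.mul_mk]
    rfl
  cases b with
  | true =>
    rw [tb_true, h1, key true]
    rfl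
  | false =>
    rw [tb_false, _root_.map_inv, h1, key false, ← hinv2]
    group

theorem AA1_tb_h (b : Bool) {L2 : List (ℕ+ × Bool)} (hred : IsRed L2)
    (hfree : ∀ l ∈ L2, l.1 ≠ 1) :
    AA 1 (tb b * FreeGroup.mk L2) =
      FreeGroup.mk ([((1 : ℕ+), true), ((2 : ℕ+), b)] ++ CC L2) := by
  have hH : FreeGroup.mk L2 ∈ Hsub := by
    rw [mem_Hsub_iff, toWord_mk_isRed hred]
    exact hfree
  rw [_root_.map_mul, AA1_tb, AA1_eq_tau hH, tau_mk, FreeGroup.mul_mk]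
  have : [((1 : ℕ+), true), ((2 : ℕ+), b), ((1 : ℕ+), false)] ++ DD L2 =
      [((1 : ℕ+), true), ((2 : ℕ+), b)] ++ (((1 : ℕ+), false) :: DD L2) := by simp
  rw [this, ← FreeGroup.mul_mk, CC_group, FreeGroup.mul_mk]

theorem toWord_concat3 {A B : List (ℕ+ × Bool)} (hA : IsRed A) (hB : IsRed B)
    (hj : ∀ a ∈ A.getLast?, ∀ y ∈ B.head?, ¬(y.1 = a.1 ∧ y.2 = !a.2)) :
    (FreeGroup.mk (A ++ B)).toWord = A ++ B :=
  toWord_mk_isRed (isRed_append_iff.mpr ⟨hA, hB, hj⟩)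

/-- The splicing lemma: multiplying on the right by `x₁ x₂^b x₁⁻¹ · (tail)` keeps
`(2,b) :: T` as an intact suffix, under a mild condition on the end of `x`. -/
theorem splice_main {x : F} {b : Bool} {T : List (ℕ+ × Bool)}
    (hT : IsRed (((2 : ℕ+), b) :: T)) (hT2 : ∀ l ∈ T, l.1 ≠ 2)
    (hcase : x.toWord.getLast? ≠ some ((1 : ℕ+), false) ∨
      (∃ A', x.toWord = A' ++ [((1 : ℕ+), false)] ∧ A'.getLast? ≠ some ((2 : ℕ+), !b))) :
    ∃ Q, (x * FreeGroup.mk ([((1 : ℕ+), true), ((2 : ℕ+), b)] ++ T)).toWord =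
      Q ++ ((2 : ℕ+), b) :: T := by
  have hKred : IsRed ([((1 : ℕ+), true), ((2 : ℕ+), b)] ++ T) := by
    refine List.isChain_cons_cons.mpr ⟨?_, hT⟩
    rintro ⟨h1, _⟩
    exact two_ne_one h1
  rcases hcase with hc | ⟨A', hA', hA'2⟩
  · refine ⟨x.toWord ++ [((1 : ℕ+), true)], ?_⟩
    have hx : x = FreeGroup.mk x.toWord := (FreeGroup.mk_toWord).symm
    conv_lhs => rw [hx]
    rw [FreeGroup.mul_mk]
    rw [toWord_concat3 (isRed_toWord x) hKred ?_]
    · simp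
    · intro a ha y hy
      simp only [List.cons_append, List.head?_cons, Option.mem_def, Option.some.injEq] at hy
      subst hy
      rintro ⟨h1, h2⟩
      apply hc
      rw [Option.mem_def] at ha
      rw [ha]
      refine congrArg some (Prod.ext h1.symm ?_)
      simp at h2
      simp [h2]
  · have hx : x = FreeGroup.mk (A' ++ [((1 : ℕ+), false)]) := by
      rw [← hA', FreeGroup.mk_toWord]
    refine ⟨A', ?_⟩
    conv_lhs => rw [hx]
    rw [FreeGroup.mul_mk]
    have hlist : (A' ++ [((1 : ℕ+), false)]) ++ ([((1 : ℕ+), true), ((2 : ℕ+), b)] ++ T) =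
        A' ++ ((1 : ℕ+), !true) :: ((1 : ℕ+), true) :: (((2 : ℕ+), b) :: T) := by simp
    rw [hlist, mk_step]
    have hA'red : IsRed A' := by
      have : IsRed (A' ++ [((1 : ℕ+), false)]) := by rw [← hA']; exact isRed_toWord x
      exact this.prefix ⟨[((1 : ℕ+), false)], rfl⟩
    rw [toWord_concat3 hA'red hT ?_]
    intro a ha y hy
    simp only [List.head?_cons, Option.mem_def, Option.some.injEq] at hy
    subst hy
    rintro ⟨h1, h2⟩
    apply hA'2
    rw [Option.mem_def] at ha
    rw [ha]
    have ha2 : a.2 = !b := by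
      have h2' : b = !a.2 := h2
      rw [h2', Bool.not_not]
    exact congrArg some (Prod.ext h1.symm ha2)

theorem bool_compat {b c : Bool} (h : ¬(b = !c)) : ¬(c = !b) := by
  cases b <;> cases c <;> simp_all

theorem mem_of_getLast?' {β : Type*} {l : List β} {a : β} (h : l.getLast? = some a) :
    a ∈ l := by
  have hne : l ≠ [] := by rintro rfl; simp at h
  rw [List.getLast?_eq_getLast hne] at h
  have hm := List.getLast_mem hne
  exact (Option.some_injective _ h) ▸ hm

theorem AA1_main : ∀ (n : ℕ) (w : F), w.toWord.length ≤ n →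
    ∀ (L1 : List (ℕ+ × Bool)) (b : Bool) (L2 : List (ℕ+ × Bool)),
      w.toWord = L1 ++ ((1 : ℕ+), b) :: L2 → (∀ l ∈ L2, l.1 ≠ 1) →
      ∃ Q, (AA 1 w).toWord = Q ++ ((2 : ℕ+), b) :: CC L2 := by
  intro n
  induction n with
  | zero =>
    intro w hlen L1 b L2 hdec hfree
    rw [hdec] at hlen
    simp at hlen
  | succ n ih =>
    intro w hlen L1 b L2 hdec hfree
    have hred : IsRed w.toWord := isRed_toWord w
    have hredL1 : IsRed L1 := hred.prefix ⟨((1 : ℕ+), b) :: L2, by rw [hdec]⟩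
    have hredbL2 : IsRed (((1 : ℕ+), b) :: L2) := hred.suffix ⟨L1, by rw [hdec]⟩
    have hredL2 : IsRed L2 := hredbL2.tail
    set u := FreeGroup.mk L1 with hu_def
    have hu : u.toWord = L1 := toWord_mk_isRed hredL1
    have hw_eq : w = u * (tb b * FreeGroup.mk L2) := by
      rw [hu_def, tb, FreeGroup.mul_mk, FreeGroup.mul_mk]
      conv_lhs => rw [← FreeGroup.mk_toWord (x := w)]
      rw [hdec]
      rfl
    have himg : AA 1 w = AA 1 u * FreeGroup.mk ([((1 : ℕ+), true), ((2 : ℕ+), b)] ++ CC L2) := by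
      rw [hw_eq, _root_.map_mul, AA1_tb_h b hredL2 hfree]
    have hTred : IsRed (((2 : ℕ+), b) :: CC L2) := by
      refine List.isChain_cons.mpr ⟨?_, CC_isRed hredL2⟩
      intro y hy
      rintro ⟨h1, _⟩
      exact CC_free hfree y (List.mem_of_mem_head? hy) h1
    have hjunc : ∀ a ∈ L1.getLast?, ¬((1 : ℕ+) = a.1 ∧ b = !a.2) := by
      have h' : IsRed (L1 ++ ((1 : ℕ+), b) :: L2) := by rw [← hdec]; exact hred
      have h'' := (isRed_append_iff.mp h').2.2
      intro a ha
      exact h'' a ha ((1 : ℕ+), b) rfl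
    suffices hdisj : (AA 1 u).toWord.getLast? ≠ some ((1 : ℕ+), false) ∨
        (∃ A', (AA 1 u).toWord = A' ++ [((1 : ℕ+), false)] ∧
          A'.getLast? ≠ some ((2 : ℕ+), !b)) by
      obtain ⟨Q, hQ⟩ := splice_main hTred (CC_free hfree) hdisj
      exact ⟨Q, by rw [himg]; exact hQ⟩
    rcases last_one_decomp L1 with h1free | ⟨M1, c, M2, hdecL1, hM2⟩
    · -- `u` does not involve strand 1
      have huH : u ∈ Hsub := mem_Hsub_iff.mpr (by rw [hu]; exact h1free)
      have hW1 : (AA 1 u).toWord = DD L1 := by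
        rw [AA1_eq_tau huH, hu_def, tau_mk, toWord_mk_isRed (isRed_DD hredL1)]
      have h2free : ∀ l ∈ DD L1, l.1 ≠ 2 := DD_free h1free
      by_cases hlast : (AA 1 u).toWord.getLast? = some ((1 : ℕ+), false)
      · right
        have hne : DD L1 ≠ [] := by
          intro hc
          rw [hW1, hc] at hlast
          simp at hlast
        have hlast' : (DD L1).getLast hne = ((1 : ℕ+), false) := by
          rw [hW1, List.getLast?_eq_getLast hne] at hlast
          exact Option.some_injective _ hlast
        refine ⟨(DD L1).dropLast, ?_, ?_⟩
        · rw [hW1]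
          conv_lhs => rw [← List.dropLast_append_getLast hne]
          rw [hlast']
        · intro hc
          have hm : ((2 : ℕ+), !b) ∈ (DD L1).dropLast := mem_of_getLast?' hc
          have : ((2 : ℕ+), !b) ∈ DD L1 := (List.dropLast_sublist _).mem hm
          exact h2free _ this rfl
      · left; exact hlast
    · -- `u` itself ends with a strand-1 letter: use the inductive hypothesis
      have hlenL1 : L1.length ≤ n := by
        rw [hdec] at hlen
        simp only [List.length_append, List.length_cons] at hlen
        omega
      have hM2red' : IsRed (((1 : ℕ+), c) :: M2) := hredL1.suffix ⟨M1, by rw [hdecL1]⟩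
      have hM2red : IsRed M2 := hM2red'.tail
      obtain ⟨Q1, hW1⟩ := ih u (by rw [hu]; exact hlenL1) M1 c M2 (by rw [hu, hdecL1]) hM2
      rcases List.eq_nil_or_concat (CC M2) with hR | ⟨R', y, hR⟩
      swap
      · rw [List.concat_eq_append] at hR
        by_cases hy : y = ((1 : ℕ+), false)
        · right
          refine ⟨Q1 ++ ((2 : ℕ+), c) :: R', ?_, ?_⟩
          · rw [hW1, hR, hy]; simp
          · rcases List.eq_nil_or_concat R' with hR' | ⟨R'', z, hR'⟩
            · subst hR'
              have hCC1 : CC M2 = [((1 : ℕ+), false)] := by rw [hR, hy]; rfl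
              have hM2nil : M2 = [] := CC_eq_single hM2red hCC1
              have hL1last : L1.getLast? = some ((1 : ℕ+), c) := by
                rw [hdecL1, hM2nil]
                exact List.getLast?_concat
              have hcompat := hjunc ((1 : ℕ+), c) (by rw [hL1last]; rfl)
              have hbc : ¬(b = !c) := fun hb => hcompat ⟨rfl, hb⟩
              intro hc2
              have h' : (Q1 ++ [((2 : ℕ+), c)]).getLast? = some ((2 : ℕ+), !b) := hc2
              rw [List.getLast?_concat] at h'
              have heq := Option.some_injective _ h'
              exact bool_compat hbc (congrArg Prod.snd heq)
            · rw [List.concat_eq_append] at hR'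
              subst hR'
              rw [show Q1 ++ ((2 : ℕ+), c) :: (R'' ++ [z]) = (Q1 ++ ((2 : ℕ+), c) :: R'') ++ [z] by simp,
                List.getLast?_concat]
              intro hc2
              have hz : z = ((2 : ℕ+), !b) := Option.some_injective _ hc2
              have hzm : z ∈ CC M2 := by
                rw [hR]
                exact List.mem_append.mpr (Or.inl (List.mem_append.mpr (Or.inr (List.mem_singleton.mpr rfl))))
              exact CC_free hM2 z hzm (by rw [hz])
        · left
          rw [hW1, hR,
            show Q1 ++ ((2 : ℕ+), c) :: (R' ++ [y]) = (Q1 ++ ((2 : ℕ+), c) :: R') ++ [y] by simp,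
            List.getLast?_concat]
          intro hc
          exact hy (Option.some_injective _ hc)
      · left
        rw [hW1, hR, List.getLast?_concat]
        intro hc
        have := Option.some_injective _ hc
        exact two_ne_one (congrArg Prod.fst this)

/-! ### Assembly -/

theorem tls_AA1 {w : F} (h : tls w = some (some false)) :
    tls (AA 1 w) = some (some false) := by
  have hne : w.toWord ≠ [] := by intro hc; rw [tls, hc] at h; simp at h
  have hlast : w.toWord.getLast hne = ((1 : ℕ+), false) := by
    rw [tls, List.getLast?_eq_getLast hne] at h
    simp only [Option.map_some, Option.some.injEq] at h
    set l := w.toWord.getLast hne with hl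
    by_cases h1 : l.1 = 1
    · rw [fLet, if_pos h1] at h
      exact Prod.ext h1 (by simpa using h)
    · rw [fLet, if_neg h1] at h; simp at h
  have hdec : w.toWord = w.toWord.dropLast ++ ((1 : ℕ+), false) :: [] := by
    conv_lhs => rw [← List.dropLast_append_getLast hne]
    rw [hlast]
  obtain ⟨Q, hQ⟩ := AA1_main (w.toWord.length) w le_rfl _ false [] hdec (by simp)
  have hCCnil : CC ([] : List (ℕ+ × Bool)) = [((1 : ℕ+), false)] := by simp [CC, DD]
  rw [hCCnil] at hQ
  have hQ' : (AA 1 w).toWord = (Q ++ [((2 : ℕ+), false)]) ++ [((1 : ℕ+), false)] := by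
    rw [hQ]; simp
  rw [tls, hQ', List.getLast?_concat]
  simp [fLet]

theorem tls_AA1_of1 : tls (AA 1 (FreeGroup.of (1 : ℕ+))) = some (some false) := by
  rw [← tb_true, AA1_tb]
  have hredK : IsRed [((1 : ℕ+), true), ((2 : ℕ+), true), ((1 : ℕ+), false)] := by
    refine List.isChain_cons_cons.mpr ⟨?_, List.isChain_cons_cons.mpr ⟨?_, List.isChain_singleton _⟩⟩
    · rintro ⟨h1, _⟩; exact two_ne_one h1
    · rintro ⟨h1, _⟩; exact one_ne_two h1
  rw [tls, toWord_mk_isRed hredK,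
    show [((1 : ℕ+), true), ((2 : ℕ+), true), ((1 : ℕ+), false)] =
      [((1 : ℕ+), true), ((2 : ℕ+), true)] ++ [((1 : ℕ+), false)] from rfl,
    List.getLast?_concat]
  simp [fLet]

theorem tls_of1 : tls (FreeGroup.of (1 : ℕ+)) = some (some true) := by
  rw [tls, FreeGroup.toWord_of]
  simp [fLet]

def shiftGens : Set Binf := Set.range fun i : ℕ+ => braidGen (i + 1)

theorem rho_mem_StabC {c : Binf} (hc : c ∈ Subgroup.closure shiftGens) :
    rho c ∈ StabC := by
  induction hc using Subgroup.closure_induction with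
  | mem x hx =>
    obtain ⟨i, rfl⟩ := hx
    rw [rho_gen]
    exact phi_mem_StabC (pnat_ne (by have := i.pos; push_cast; omega))
  | one => rw [_root_.map_one]; exact Subgroup.one_mem _
  | mul x y _ _ hx hy => rw [_root_.map_mul]; exact Subgroup.mul_mem _ hx hy
  | inv x _ hx => rw [_root_.map_inv]; exact Subgroup.inv_mem _ hx

theorem s_mem_closure (s : Binf →* Binf) (hs : ∀ i : ℕ+, s (braidGen i) = braidGen (i + 1))
    (c : Binf) : s c ∈ Subgroup.closure shiftGens := by
  have hc : c ∈ Subgroup.closure (Set.range (PresentedGroup.of : ℕ+ → Binf)) := by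
    rw [PresentedGroup.closure_range_of]; exact Subgroup.mem_top c
  induction hc using Subgroup.closure_induction with
  | mem x hx =>
    obtain ⟨i, rfl⟩ := hx
    rw [show (PresentedGroup.of i : Binf) = braidGen i from rfl, hs]
    exact Subgroup.subset_closure ⟨i, rfl⟩
  | one => rw [_root_.map_one]; exact Subgroup.one_mem _
  | mul x y _ _ hx hy => rw [_root_.map_mul]; exact Subgroup.mul_mem _ hx hy
  | inv x _ hx => rw [_root_.map_inv]; exact Subgroup.inv_mem _ hx

theorem prod_ne_one (s : Binf →* Binf) (hs : ∀ i : ℕ+, s (braidGen i) = braidGen (i + 1)) :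
    ∀ (L : List Binf), L ≠ [] → ∀ c : Binf,
      (L.map fun a => s a * braidGen 1).prod * s c ≠ 1 := by
  suffices key : ∀ (L : List Binf), L ≠ [] → ∀ c : Binf,
      tls ((rho ((L.map fun a => s a * braidGen 1).prod * s c)) (FreeGroup.of 1)) =
        some (some false) by
    intro L hL c h1
    have hkey := key L hL c
    rw [h1, _root_.map_one] at hkey
    rw [show ((1 : MulAut F) (FreeGroup.of (1 : ℕ+))) = FreeGroup.of (1 : ℕ+) from rfl,
      tls_of1] at hkey
    simp at hkey
  intro L
  induction L with
  | nil => intro h; exact absurd rfl h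
  | cons a L' ihL =>
    intro _ c
    have hstep : ((a :: L').map fun x => s x * braidGen 1).prod * s c =
        s a * (braidGen 1 * ((L'.map fun x => s x * braidGen 1).prod * s c)) := by
      rw [List.map_cons, List.prod_cons]
      group
    rw [hstep, _root_.map_mul, _root_.map_mul]
    have happ : ((rho (s a)) * ((rho (braidGen 1)) * rho ((L'.map fun x => s x * braidGen 1).prod * s c))) (FreeGroup.of (1 : ℕ+)) =
        (rho (s a)) ((rho (braidGen 1)) ((rho ((L'.map fun x => s x * braidGen 1).prod * s c)) (FreeGroup.of (1 : ℕ+)))) := rfl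
    rw [happ]
    have hgen1 : ∀ v : F, (rho (braidGen 1)) v = AA 1 v := by
      intro v; rw [rho_gen]; rfl
    have hstab : rho (s a) ∈ StabC := rho_mem_StabC (s_mem_closure s hs a)
    rcases eq_or_ne L' [] with rfl | hL'
    · have h0 : (rho ((List.map (fun x => s x * braidGen 1) []).prod * s c)) (FreeGroup.of (1 : ℕ+)) =
          FreeGroup.of (1 : ℕ+) := by
        simp only [List.map_nil, List.prod_nil, one_mul]
        exact (rho_mem_StabC (s_mem_closure s hs c)).1
      rw [h0, hgen1, tls_stab hstab, tls_AA1_of1]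
    · rw [hgen1, tls_stab hstab]
      exact tls_AA1 (ihL hL' c)

theorem fold_structure (s : Binf →* Binf) (p : Binf) :
    ∀ l : List Binf, l ≠ [] → ∃ (L : List Binf) (c : Binf), L ≠ [] ∧
      l.foldl (bracket s) p = p * ((L.map fun a => s a * braidGen 1).prod * s c) := by
  intro l
  induction l using List.reverseRecOn with
  | nil => intro h; exact absurd rfl h
  | append_singleton l' a ihl =>
    intro _
    rcases eq_or_ne l' [] with rfl | hne
    · refine ⟨[a], p⁻¹, by simp, ?_⟩
      simp only [List.nil_append, List.foldl_cons, List.foldl_nil, List.map_cons,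
        List.map_nil, List.prod_cons, List.prod_nil]
      rw [bracket, _root_.map_inv]
      group
    · obtain ⟨L, c, hLne, hfold⟩ := ihl hne
      refine ⟨L ++ [c * a], (l'.foldl (bracket s) p)⁻¹, by simp, ?_⟩
      rw [List.foldl_append, List.foldl_cons, List.foldl_nil, bracket,
        List.map_append, List.prod_append]
      simp only [List.map_cons, List.map_nil, List.prod_cons, List.prod_nil,
        _root_.map_inv, _root_.map_mul, hfold]
      group

end DehornoyProof

/-- Irreflexivity in `B∞`: `p ≠ (((p[q₁])[q₂])…)[q_k]` for every `k ≥ 1`. -/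
theorem bracket_irreflexive
    (s : Binf →* Binf) (hs : ∀ i : ℕ+, s (braidGen i) = braidGen (i + 1))
    (k : ℕ) (hk : 1 ≤ k) (p : Binf) (q : Fin k → Binf) :
    p ≠ (List.ofFn q).foldl (bracket s) p := by
  intro heq
  have hne : (List.ofFn q) ≠ [] := by
    intro hc
    have hlen := List.length_ofFn (f := q)
    rw [hc] at hlen
    simp at hlen
    omega
  obtain ⟨L, c, hLne, hfold⟩ := DehornoyProof.fold_structure s p (List.ofFn q) hne
  rw [hfold] at heq
  exact DehornoyProof.prod_ne_one s hs L hLne c (left_eq_mul.mp heq)
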